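/- Let B, a_1, a_2, X be complex numbers with B ≠ 1, a_1 ≠ a_2, and all of |B a_i X|, |B^{-1} a_i X| < 1 (i=1,2). Set W_π(k) = (B^{k+1}−B^{-k})/(B−1), W_τ(k) = (a_1^{k+1}−a_2^{k+1})/(a_1−a_2), J(k) = W_τ(k) + a_1 a_2 X · W_τ(k−1) for k ≥ 1 and J(0) = W_τ(0) = 1. Then Σ_{k=0}^∞ W_π(k) J(k) X^k = ((1−a_1 a_2 X²)(1+a_1 X)(1+a_2 X)) / ((1−B a_1 X)(1−B a_2 X)(1−B^{-1} a_1 X)(1−B^{-1} a_2 X)). -/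

import Mathlib

set_option maxHeartbeats 1000000


theorem unramified_computation_full (B a₁ a₂ X : ℂ) (hB0 : B ≠ 0) (ha10 : a₁ ≠ 0)
    (ha20 : a₂ ≠ 0) (hB1 : B ≠ 1) (ha : a₁ ≠ a₂)
    (h1 : ‖B * a₁ * X‖ < 1) (h2 : ‖B * a₂ * X‖ < 1)
    (h3 : ‖B⁻¹ * a₁ * X‖ < 1) (h4 : ‖B⁻¹ * a₂ * X‖ < 1)
    (Wπ Wτ J : ℕ → ℂ)
    (hWπ : ∀ k, Wπ k = (B ^ (k + 1) - B ^ (-(k : ℤ))) / (B - 1))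
    (hWτ : ∀ k, Wτ k = (a₁ ^ (k + 1) - a₂ ^ (k + 1)) / (a₁ - a₂))
    (hJ0 : J 0 = Wτ 0)
    (hJ : ∀ k : ℕ, 1 ≤ k → J k = Wτ k + a₁ * a₂ * X * Wτ (k - 1)) :
    HasSum (fun k : ℕ => Wπ k * J k * X ^ k)
      ((1 - a₁ * a₂ * X ^ 2) * (1 + a₁ * X) * (1 + a₂ * X)
        / ((1 - B * a₁ * X) * (1 - B * a₂ * X) * (1 - B⁻¹ * a₁ * X) * (1 - B⁻¹ * a₂ * X))) := by
  have hBm1 : B - 1 ≠ 0 := sub_ne_zero.mpr hB1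
  have haa : a₁ - a₂ ≠ 0 := sub_ne_zero.mpr ha
  have hd1 : 1 - B * a₁ * X ≠ 0 := by
    intro h
    have : ‖B * a₁ * X‖ = 1 := by
      have : B * a₁ * X = 1 := by linear_combination -h
      simp [this]
    linarith
  have hd2 : 1 - B * a₂ * X ≠ 0 := by
    intro h
    have : ‖B * a₂ * X‖ = 1 := by
      have : B * a₂ * X = 1 := by linear_combination -h
      simp [this]
    linarith
  have hd3 : 1 - B⁻¹ * a₁ * X ≠ 0 := by
    intro h
    have : ‖B⁻¹ * a₁ * X‖ = 1 := by
      have : B⁻¹ * a₁ * X = 1 := by linear_combination -h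
      simp [this]
    linarith
  have hd4 : 1 - B⁻¹ * a₂ * X ≠ 0 := by
    intro h
    have : ‖B⁻¹ * a₂ * X‖ = 1 := by
      have : B⁻¹ * a₂ * X = 1 := by linear_combination -h
      simp [this]
    linarith
  -- geometric series
  have g1 : HasSum (fun k : ℕ => (B * a₁ * X) ^ k) (1 - B * a₁ * X)⁻¹ :=
    hasSum_geometric_of_norm_lt_one (by simpa using h1)
  have g2 : HasSum (fun k : ℕ => (B * a₂ * X) ^ k) (1 - B * a₂ * X)⁻¹ :=
    hasSum_geometric_of_norm_lt_one (by simpa using h2)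
  have g3 : HasSum (fun k : ℕ => (B⁻¹ * a₁ * X) ^ k) (1 - B⁻¹ * a₁ * X)⁻¹ :=
    hasSum_geometric_of_norm_lt_one (by simpa using h3)
  have g4 : HasSum (fun k : ℕ => (B⁻¹ * a₂ * X) ^ k) (1 - B⁻¹ * a₂ * X)⁻¹ :=
    hasSum_geometric_of_norm_lt_one (by simpa using h4)
  set C₁ : ℂ := 1 + a₂ * X with hC1
  set C₂ : ℂ := 1 + a₁ * X with hC2
  set D : ℂ := (B - 1) * (a₁ - a₂) with hD
  have hDne : D ≠ 0 := mul_ne_zero hBm1 haa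
  have key : HasSum
      (fun k : ℕ => (B * a₁ * C₁ * (B * a₁ * X) ^ k - B * a₂ * C₂ * (B * a₂ * X) ^ k
        - a₁ * C₁ * (B⁻¹ * a₁ * X) ^ k + a₂ * C₂ * (B⁻¹ * a₂ * X) ^ k) / D)
      ((B * a₁ * C₁ * (1 - B * a₁ * X)⁻¹ - B * a₂ * C₂ * (1 - B * a₂ * X)⁻¹
        - a₁ * C₁ * (1 - B⁻¹ * a₁ * X)⁻¹ + a₂ * C₂ * (1 - B⁻¹ * a₂ * X)⁻¹) / D) := by
    apply HasSum.div_const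
    exact (((g1.mul_left _).sub (g2.mul_left _)).sub (g3.mul_left _)).add (g4.mul_left _)
  have hJ' : ∀ k : ℕ, J k = (a₁ ^ (k + 1) * C₁ - a₂ ^ (k + 1) * C₂) / (a₁ - a₂) := by
    intro k
    cases k with
    | zero =>
      rw [hJ0, hWτ]
      field_simp
      ring
    | succ n =>
      rw [hJ n.succ (Nat.le_add_left 1 n), hWτ, hWτ]
      simp only [Nat.succ_sub_one]
      field_simp
      rw [hC1, hC2, Nat.succ_eq_add_one]
      ring
  have heq : ∀ k : ℕ, Wπ k * J k * X ^ k
      = (B * a₁ * C₁ * (B * a₁ * X) ^ k - B * a₂ * C₂ * (B * a₂ * X) ^ k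
        - a₁ * C₁ * (B⁻¹ * a₁ * X) ^ k + a₂ * C₂ * (B⁻¹ * a₂ * X) ^ k) / D := by
    intro k
    rw [hWπ, hJ']
    have hz : B ^ (-(k : ℤ)) = (B⁻¹) ^ k := by
      rw [zpow_neg, zpow_natCast, inv_pow]
    rw [hz, hD]
    field_simp
    ring
  rw [funext heq] at *
  have e3 : 1 - B⁻¹ * a₁ * X = B⁻¹ * (B - a₁ * X) := by
    field_simp
  have e4 : 1 - B⁻¹ * a₂ * X = B⁻¹ * (B - a₂ * X) := by
    field_simp
  have hQ1 : B - a₁ * X ≠ 0 := by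
    intro h; exact hd3 (by rw [e3, h, mul_zero])
  have hQ2 : B - a₂ * X ≠ 0 := by
    intro h; exact hd4 (by rw [e4, h, mul_zero])
  convert key using 1
  rw [hC1, hC2, hD, e3, e4, mul_inv, mul_inv, inv_inv]
  have hM : (1 - B * a₁ * X) * (1 - B * a₂ * X) * (B - a₁ * X) * (B - a₂ * X) ≠ 0 :=
    mul_ne_zero (mul_ne_zero (mul_ne_zero hd1 hd2) hQ1) hQ2
  have hdenom : (1 - B * a₁ * X) * (1 - B * a₂ * X) * (B⁻¹ * (B - a₁ * X)) * (B⁻¹ * (B - a₂ * X))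
      = (1 - B * a₁ * X) * (1 - B * a₂ * X) * (B - a₁ * X) * (B - a₂ * X) / B ^ 2 := by
    field_simp
  rw [hdenom, div_div_eq_mul_div, div_eq_div_iff hM hDne]
    <;> try skip
  have hc1 : (1 - B * a₁ * X) * (1 - B * a₁ * X)⁻¹ = 1 := mul_inv_cancel₀ hd1
  have hc2 : (1 - B * a₂ * X) * (1 - B * a₂ * X)⁻¹ = 1 := mul_inv_cancel₀ hd2
  have hc3 : (B - a₁ * X) * (B - a₁ * X)⁻¹ = 1 := mul_inv_cancel₀ hQ1
  have hc4 : (B - a₂ * X) * (B - a₂ * X)⁻¹ = 1 := mul_inv_cancel₀ hQ2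
  linear_combination
      (-(B * a₁ * (1 + a₂ * X) * ((1 - B * a₂ * X) * (B - a₁ * X) * (B - a₂ * X)))) * hc1
    + (B * a₂ * (1 + a₁ * X) * ((1 - B * a₁ * X) * (B - a₁ * X) * (B - a₂ * X))) * hc2
    + (a₁ * (1 + a₂ * X) * B * ((1 - B * a₁ * X) * (1 - B * a₂ * X) * (B - a₂ * X))) * hc3
    + (-(a₂ * (1 + a₁ * X) * B * ((1 - B * a₁ * X) * (1 - B * a₂ * X) * (B - a₁ * X)))) * hc4
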